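/- For n ≥ 1, the sum over all signed permutations σ in the hyperoctahedral group B_n of (-1)^{cyc(σ)} s^{neg(σ)} t^{nsum(σ)} · ∏_{i ∈ EXC_B(σ)} x_i equals -(1 + (-1)^{n-1} x_n s^n t^{n(n+1)/2}) · ∏_{j=1}^{n-1}(x_j - 1). -/

import Mathlib

open Finset

/-
A signed permutation σ ∈ Bₙ is encoded by a pair (π, ε), where
π : Equiv.Perm (Fin n) is the underlying permutation |σ| (0-based) and
ε v = true iff the value v+1 occurs negated in σ; thus σ(i) = sval ε (π i),
where sval ε v = ±(v+1).
-/

/-- The signed value ±(v+1) of the (0-based) value `v`. -/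
def sval {n : ℕ} (ε : Fin n → Bool) (v : Fin n) : ℤ :=
  if ε v then -((v : ℤ) + 1) else (v : ℤ) + 1

/-- Number of cycles of the underlying permutation |σ| (counting fixed points). -/
def cyc {n : ℕ} (π : Equiv.Perm (Fin n)) : ℕ :=
  π.cycleType.card + (Finset.univ.filter fun i => π i = i).card

/-- neg(σ) = #{i : σ(i) < 0}. -/
def negB {n : ℕ} (ε : Fin n → Bool) : ℕ :=
  (Finset.univ.filter fun v => ε v = true).card

/-- nsum(σ) = ∑_{σ(i)<0} |σ(i)|. -/
def nsumB {n : ℕ} (ε : Fin n → Bool) : ℕ :=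
  ∑ v ∈ Finset.univ.filter (fun v => ε v = true), (v.val + 1)

/-- Type B excedance set (as 0-based values):
v ∈ EXC_B(σ) iff σ(v+1) = -(v+1) or σ(v+1) > σ(i) where σ(i) = ±(v+1);
here σ(v+1) = sval ε (π v) and σ(i) = sval ε v. -/
def excB {n : ℕ} (π : Equiv.Perm (Fin n)) (ε : Fin n → Bool) : Finset (Fin n) :=
  Finset.univ.filter fun v =>
    sval ε (π v) = -((v : ℤ) + 1) ∨ sval ε v < sval ε (π v)

section aux
variable {R : Type*} [CommRing R] {n : ℕ}

/-- The matrix whose (transposed) Leibniz expansion gives the inner sum over `π`. -/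
def matB (x : Fin n → R) (S T : R) (ε : Fin n → Bool) : Matrix (Fin n) (Fin n) R :=
  Matrix.of fun i j =>
    (if ε j then S * T ^ (j.val + 1) else 1) *
    (if sval ε i = -((j : ℤ) + 1) ∨ sval ε j < sval ε i then x j else 1)

/-- Elementary row-reduction matrix: row i ↦ row i − row (i+1). -/
def elimE (n : ℕ) (R : Type*) [CommRing R] : Matrix (Fin n) (Fin n) R :=
  Matrix.of fun i k => (if k = i then (1:R) else 0) - (if k.val = i.val + 1 then 1 else 0)

lemma elimE_det : (elimE n R).det = 1 := by
  rw [Matrix.det_of_upperTriangular]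
  · apply Finset.prod_eq_one
    intro i _
    simp [elimE]
  · intro i j hij
    have h1 : j ≠ i := Fin.ne_of_lt hij
    have h2 : ¬ (j.val = i.val + 1) := by
      have hij' : (j:ℕ) < (i:ℕ) := hij
      omega
    simp [elimE, h1, h2]

lemma elimE_mul (A : Matrix (Fin n) (Fin n) R) (i j : Fin n) :
    (elimE n R * A) i j = A i j - (if h : i.val + 1 < n then A ⟨i.val+1, h⟩ j else 0) := by
  rw [Matrix.mul_apply]
  simp only [elimE, Matrix.of_apply, sub_mul, ite_mul, one_mul, zero_mul]
  rw [Finset.sum_sub_distrib]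
  congr 1
  · simp
  · by_cases h : i.val + 1 < n
    · rw [dif_pos h]
      rw [Finset.sum_eq_single (⟨i.val+1, h⟩ : Fin n)]
      · simp
      · intro k _ hk
        rw [if_neg]
        intro hc
        exact hk (Fin.ext hc)
      · intro hc; exact absurd (Finset.mem_univ _) hc
    · rw [dif_neg h]
      apply Finset.sum_eq_zero
      intro k _
      rw [if_neg]
      intro hc
      have := k.isLt; omega

lemma cyc_sign (π : Equiv.Perm (Fin n)) :
    ((-1 : R)) ^ cyc π = (-1)^n * ((Equiv.Perm.sign π : ℤ) : R) := by
  have hs : π.support.card ≤ n := by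
    simpa using Finset.card_le_univ π.support
  have hfix : (Finset.univ.filter fun i => π i = i).card = n - π.support.card := by
    have h := Finset.card_filter_add_card_filter_not (s := (univ : Finset (Fin n)))
        (p := fun i => π i = i)
    have h2 : (Finset.univ.filter fun i => ¬ π i = i) = π.support := by
      ext v; simp [Equiv.Perm.mem_support]
    rw [h2] at h
    simp only [Finset.card_univ, Fintype.card_fin] at h
    omega
  have hsign : ((Equiv.Perm.sign π : ℤ) : R)
      = (-1)^(π.cycleType.sum + Multiset.card π.cycleType) := by
    rw [Equiv.Perm.sign_of_cycleType]
    push_cast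
    norm_num
  rw [hsign, cyc, hfix, ← Equiv.Perm.sum_cycleType]
  set c := Multiset.card π.cycleType with hc
  set s := π.cycleType.sum with hss
  have hs' : s ≤ n := by rw [hss, Equiv.Perm.sum_cycleType]; exact hs
  obtain ⟨m, hm⟩ : ∃ m, n = m + s := ⟨n - s, by omega⟩
  rw [show c + (n - s) = c + m by omega, show n = m + s from hm,
    pow_add, pow_add, pow_add]
  have h2 : (-1:R)^s * (-1:R)^s = 1 := by
    rw [← pow_add, ← two_mul, pow_mul]; norm_num
  linear_combination (-(-1:R)^m * (-1:R)^c) * h2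

lemma term_eq (x : Fin n → R) (S T : R) (ε : Fin n → Bool) (π : Equiv.Perm (Fin n)) :
    S ^ negB ε * T ^ nsumB ε * ∏ v ∈ excB π ε, x v
      = ∏ v, matB x S T ε (π v) v := by
  simp only [matB, Matrix.of_apply]
  rw [Finset.prod_mul_distrib]
  congr 1
  · rw [negB, nsumB, ← Finset.prod_filter]
    rw [Finset.prod_mul_distrib, Finset.prod_const, Finset.prod_pow_eq_pow_sum]
  · rw [excB, Finset.prod_filter]

lemma innerSumB (x : Fin n → R) (S T : R) (ε : Fin n → Bool) :
    ∑ π : Equiv.Perm (Fin n),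
      (-1:R)^cyc π * S^negB ε * T^nsumB ε * ∏ v ∈ excB π ε, x v
    = (-1)^n * (matB x S T ε).det := by
  rw [Matrix.det_apply', Finset.mul_sum]
  refine Finset.sum_congr rfl fun π _ => ?_
  rw [mul_assoc ((-1:R)^cyc π), mul_assoc ((-1:R)^cyc π), term_eq x S T ε π, cyc_sign]
  ring

lemma det_mixed (x : Fin n → R) (S T : R) (ε : Fin n → Bool) (a b : Fin n)
    (ha : ε a = true) (hb : ε b = false)
    (hamin : ∀ v, ε v = true → a ≤ v) (hbmin : ∀ v, ε v = false → b ≤ v) :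
    (matB x S T ε).det = 0 := by
  apply Matrix.det_zero_of_row_eq (i := a) (j := b)
  · intro h; rw [h, hb] at ha; cases ha
  · funext j
    show matB x S T ε a j = matB x S T ε b j
    simp only [matB, Matrix.of_apply]
    congr 1
    have hsa : sval ε a = -((a:ℤ)+1) := by simp [sval, ha]
    have hsb : sval ε b = ((b:ℤ)+1) := by simp [sval, hb]
    have key : (sval ε a = -((j : ℤ) + 1) ∨ sval ε j < sval ε a) ↔
        (sval ε b = -((j : ℤ) + 1) ∨ sval ε j < sval ε b) := by
      rw [hsa, hsb]
      constructor
      · rintro (h | h)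
        · right
          have hja : (j : ℕ) = (a : ℕ) := by omega
          have : j = a := Fin.ext hja
          rw [this, hsa]
          omega
        · right
          omega
      · rintro (h | h)
        · exfalso; omega
        · cases hεj : ε j with
          | false =>
            exfalso
            have hsj : sval ε j = (j:ℤ)+1 := by simp [sval, hεj]
            have hbj : b ≤ j := hbmin j hεj
            have : (b:ℕ) ≤ (j:ℕ) := hbj
            rw [hsj] at h
            omega
          | true =>
            have hsj : sval ε j = -((j:ℤ)+1) := by simp [sval, hεj]
            have haj : a ≤ j := hamin j hεj
            rcases eq_or_lt_of_le haj with heq | hlt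
            · left; rw [← heq]
            · right
              have : (a:ℕ) < (j:ℕ) := hlt
              rw [hsj]
              omega
    rw [if_congr key rfl rfl]

lemma gaussSumB (n : ℕ) : ∑ i : Fin n, (i.val + 1) = n*(n+1)/2 := by
  rw [Fin.sum_univ_eq_sum_range (fun i => i + 1) n]
  have h : (∑ i ∈ Finset.range n, (i+1)) * 2 = n * (n+1) := by
    induction n with
    | zero => simp
    | succ m ih => rw [Finset.sum_range_succ, add_mul, ih]; ring
  omega

lemma filterNotB (hn : 1 ≤ n) :
    Finset.univ.filter (fun v : Fin n => ¬ v.val < n-1) = {⟨n-1, Nat.sub_lt hn Nat.one_pos⟩} := by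
  ext v
  have hv := v.isLt
  simp [Fin.ext_iff]
  omega

lemma cardFilterB (hn : 1 ≤ n) :
    (Finset.univ.filter (fun v : Fin n => v.val < n-1)).card = n - 1 := by
  have h := Finset.card_filter_add_card_filter_not
    (s := (univ : Finset (Fin n))) (p := fun v : Fin n => v.val < n-1)
  rw [filterNotB hn] at h
  simp only [Finset.card_univ, Fintype.card_fin, Finset.card_singleton] at h
  omega

lemma matB_false (x : Fin n → R) (S T : R) (i j : Fin n) :
    matB x S T (fun _ => false) i j = if (j:ℕ) < (i:ℕ) then x j else 1 := by
  simp only [matB, Matrix.of_apply, sval, Bool.false_eq_true, if_false, one_mul]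
  refine if_congr ?_ rfl rfl
  constructor
  · rintro (h | h) <;> omega
  · intro h; right; omega

lemma det_false (x : Fin n → R) (S T : R) :
    (matB x S T (fun _ => false)).det
      = ∏ v ∈ Finset.univ.filter (fun v : Fin n => v.val < n-1), (1 - x v) := by
  have hdet : (matB x S T (fun _ => false)).det
      = (elimE n R * matB x S T (fun _ => false)).det := by
    rw [Matrix.det_mul, elimE_det, one_mul]
  rw [hdet, Matrix.det_of_lowerTriangular]
  · rw [← Finset.prod_filter_mul_prod_filter_not univ (fun i : Fin n => i.val < n-1)]
    have h1 : ∀ i ∈ univ.filter (fun i : Fin n => i.val < n-1),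
        (elimE n R * matB x S T (fun _ => false)) i i = 1 - x i := by
      intro i hi
      simp only [mem_filter, mem_univ, true_and] at hi
      rw [elimE_mul, dif_pos (show i.val+1 < n by omega), matB_false, matB_false,
        if_neg (lt_irrefl _), if_pos (by omega : (i:ℕ) < i.val + 1)]
    have h2 : ∀ i ∈ univ.filter (fun i : Fin n => ¬ i.val < n-1),
        (elimE n R * matB x S T (fun _ => false)) i i = 1 := by
      intro i hi
      simp only [mem_filter, mem_univ, true_and] at hi
      have hv := i.isLt
      rw [elimE_mul, dif_neg (by omega : ¬ i.val+1 < n), matB_false,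
        if_neg (lt_irrefl _), sub_zero]
    rw [Finset.prod_congr rfl h1, Finset.prod_congr rfl h2, Finset.prod_const_one, mul_one]
  · intro i j hij
    have hij' : (i:ℕ) < (j:ℕ) := hij
    have hj := j.isLt
    rw [elimE_mul, dif_pos (by omega : i.val+1 < n), matB_false, matB_false,
      if_neg (by omega), if_neg (by simp only [Fin.val_mk]; omega), sub_self]

lemma matB_true (x : Fin n → R) (S T : R) (i j : Fin n) :
    matB x S T (fun _ => true) i j
      = S * T ^ (j.val + 1) * (if (i:ℕ) ≤ (j:ℕ) then x j else 1) := by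
  have hsval : ∀ v : Fin n, sval (fun _ => true) v = -((v:ℤ)+1) := fun v => by simp [sval]
  simp only [matB, Matrix.of_apply, hsval, if_true]
  congr 1
  refine if_congr ?_ rfl rfl
  constructor
  · rintro (h | h) <;> omega
  · intro h
    rcases Nat.eq_or_lt_of_le h with h' | h'
    · left; omega
    · right; omega

lemma det_true (hn : 1 ≤ n) (x : Fin n → R) (S T : R) :
    (matB x S T (fun _ => true)).det
      = S^n * T^(n*(n+1)/2) * x ⟨n-1, Nat.sub_lt hn Nat.one_pos⟩
          * ∏ v ∈ Finset.univ.filter (fun v : Fin n => v.val < n-1), (x v - 1) := by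
  have hdet : (matB x S T (fun _ => true)).det
      = (elimE n R * matB x S T (fun _ => true)).det := by
    rw [Matrix.det_mul, elimE_det, one_mul]
  rw [hdet, Matrix.det_of_lowerTriangular]
  · have hdiag : ∀ i ∈ (univ : Finset (Fin n)),
        (elimE n R * matB x S T (fun _ => true)) i i
          = S * T ^ (i.val+1) * (if i.val < n-1 then x i - 1 else x i) := by
      intro i _
      have hv := i.isLt
      by_cases h : i.val + 1 < n
      · rw [elimE_mul, dif_pos h, matB_true, matB_true,
          if_pos (le_refl _), if_neg (by simp only [Fin.val_mk]; omega),
          if_pos (by omega : i.val < n - 1)]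
        ring
      · rw [elimE_mul, dif_neg h, matB_true, if_pos (le_refl _), sub_zero,
          if_neg (by omega : ¬ i.val < n - 1)]
    rw [Finset.prod_congr rfl hdiag, Finset.prod_mul_distrib, Finset.prod_mul_distrib,
      Finset.prod_const, Finset.prod_pow_eq_pow_sum, gaussSumB,
      Finset.card_univ, Fintype.card_fin]
    rw [← Finset.prod_filter_mul_prod_filter_not univ (fun i : Fin n => i.val < n-1)]
    have h1 : ∀ i ∈ univ.filter (fun i : Fin n => i.val < n-1),
        (if i.val < n-1 then x i - 1 else x i) = x i - 1 := by
      intro i hi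
      simp only [mem_filter, mem_univ, true_and] at hi
      rw [if_pos hi]
    have h2 : (∏ i ∈ univ.filter (fun i : Fin n => ¬ i.val < n-1),
        (if i.val < n-1 then x i - 1 else x i)) = x ⟨n-1, Nat.sub_lt hn Nat.one_pos⟩ := by
      rw [filterNotB hn, Finset.prod_singleton, if_neg (by simp only [Fin.val_mk]; omega)]
    rw [Finset.prod_congr rfl h1, h2]
    ring
  · intro i j hij
    have hij' : (i:ℕ) < (j:ℕ) := hij
    have hj := j.isLt
    rw [elimE_mul, dif_pos (by omega : i.val+1 < n), matB_true, matB_true,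
      if_pos (by omega), if_pos (by simp only [Fin.val_mk]; omega), sub_self]

end aux

/-- `x v` corresponds to `x_{v+1}`; `S`, `T` are the variables `s`, `t`. -/
theorem stmt18 {R : Type*} [CommRing R] (n : ℕ) (hn : 1 ≤ n)
    (x : Fin n → R) (S T : R) :
    ∑ π : Equiv.Perm (Fin n), ∑ ε : Fin n → Bool,
      (-1 : R) ^ cyc π * S ^ negB ε * T ^ nsumB ε * ∏ v ∈ excB π ε, x v
    = -(1 + (-1 : R) ^ (n - 1) * x ⟨n - 1, by omega⟩ * S ^ n * T ^ (n * (n + 1) / 2)) *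
        ∏ v ∈ Finset.univ.filter (fun v : Fin n => v.val < n - 1), (x v - 1) := by
  rw [Finset.sum_comm]
  have step : ∀ ε : Fin n → Bool,
      ∑ π : Equiv.Perm (Fin n),
        (-1:R)^cyc π * S^negB ε * T^nsumB ε * ∏ v ∈ excB π ε, x v
      = (-1:R)^n * (matB x S T ε).det := fun ε => innerSumB x S T ε
  rw [Finset.sum_congr rfl (fun ε _ => step ε), ← Finset.mul_sum]
  -- collapse the sum over ε to the two constant sign vectors
  have hne : (fun _ => false : Fin n → Bool) ≠ (fun _ => true) := by
    intro h
    have := congrFun h ⟨0, by omega⟩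
    simp at this
  have hzero : ∀ ε : Fin n → Bool,
      ε ∉ ({(fun _ => false), (fun _ => true)} : Finset (Fin n → Bool)) →
      (matB x S T ε).det = 0 := by
    intro ε hε
    simp only [Finset.mem_insert, Finset.mem_singleton] at hε
    push_neg at hε
    obtain ⟨hf, ht⟩ := hε
    have hta : ∃ a, ε a = true := by
      by_contra h
      push_neg at h
      exact hf (funext fun v => by simpa using h v)
    have htb : ∃ b, ε b = false := by
      by_contra h
      push_neg at h
      refine ht (funext fun v => ?_)
      have := h v
      simpa using this
    obtain ⟨a0, ha0⟩ := hta
    obtain ⟨b0, hb0⟩ := htb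
    have hAne : (Finset.univ.filter fun v => ε v = true).Nonempty :=
      ⟨a0, by simp [ha0]⟩
    have hBne : (Finset.univ.filter fun v => ε v = false).Nonempty :=
      ⟨b0, by simp [hb0]⟩
    set a := (Finset.univ.filter fun v => ε v = true).min' hAne with hadef
    set b := (Finset.univ.filter fun v => ε v = false).min' hBne with hbdef
    have ha : ε a = true := by
      have := (Finset.univ.filter fun v => ε v = true).min'_mem hAne
      simpa using this
    have hb : ε b = false := by
      have := (Finset.univ.filter fun v => ε v = false).min'_mem hBne
      simpa using this
    refine det_mixed x S T ε a b ha hb ?_ ?_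
    · intro v hv
      exact Finset.min'_le _ v (by simp [hv])
    · intro v hv
      exact Finset.min'_le _ v (by simp [hv])
  have hsum : ∑ ε : Fin n → Bool, (matB x S T ε).det
      = (matB x S T (fun _ => false)).det + (matB x S T (fun _ => true)).det := by
    rw [← Finset.sum_subset
      (Finset.subset_univ ({(fun _ => false), (fun _ => true)} : Finset (Fin n → Bool)))
      (fun ε _ hε => hzero ε hε)]
    rw [Finset.sum_pair hne]
  rw [hsum, det_false, det_true hn]
  -- final algebra
  have hcard : (Finset.univ.filter (fun v : Fin n => v.val < n - 1)).card = n - 1 :=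
    cardFilterB hn
  have hprod : (∏ v ∈ Finset.univ.filter (fun v : Fin n => v.val < n-1), (1 - x v))
      = (-1:R)^(n-1) * ∏ v ∈ Finset.univ.filter (fun v : Fin n => v.val < n-1), (x v - 1) := by
    have hc : ((-1:R)^(n-1))
        = ∏ _v ∈ Finset.univ.filter (fun v : Fin n => v.val < n-1), (-1:R) := by
      rw [Finset.prod_const, hcard]
    rw [hc, ← Finset.prod_mul_distrib]
    apply Finset.prod_congr rfl
    intro v _
    ring
  rw [hprod]
  have key1 : (-1:R)^n * (-1:R)^(n-1) = -1 := by
    rw [← pow_add, show n + (n-1) = 2*(n-1)+1 by omega, pow_succ, pow_mul]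
    norm_num
  have key2 : (-1:R)^n = -(-1:R)^(n-1) := by
    conv_lhs => rw [show n = (n-1) + 1 by omega]
    rw [pow_succ]
    ring
  set P := ∏ v ∈ Finset.univ.filter (fun v : Fin n => v.val < n-1), (x v - 1)
  rw [mul_add]
  rw [show ((-1:R)^n * ((-1:R)^(n-1) * P)) = ((-1:R)^n * (-1:R)^(n-1)) * P by ring, key1]
  rw [key2]
  ring
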